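/- A locally finite group G is ∞-MIF if and only if G is omnigenous. -/
import Mathlib


/-- Words in the free product `G * Fₙ` of `G` with the free group on `n` generators. -/
abbrev MixedWord (G : Type*) [Group G] (n : ℕ) :=
  Monoid.Coprod G (FreeGroup (Fin n))

/-- Evaluation of a mixed word, mapping the constants through `f` and substituting
`h i` for the `i`-th variable. -/
def MixedWord.evalHom {G H : Type*} [Group G] [Group H] {n : ℕ}
    (f : G →* H) (h : Fin n → H) (w : MixedWord G n) : H :=
  Monoid.Coprod.lift f (FreeGroup.lift h) w

/-- Evaluation of a mixed word over `G` at `h : Fin n → G`. -/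
def MixedWord.eval {G : Type*} [Group G] {n : ℕ} (h : Fin n → G)
    (w : MixedWord G n) : G :=
  w.evalHom (MonoidHom.id G) h

/-- A word `w ∈ G * Fₙ` is nontrivial if it does not lie in (the canonical copy of) `G`. -/
def MixedWord.IsNontrivial {G : Type*} [Group G] {n : ℕ} (w : MixedWord G n) : Prop :=
  w ∉ (Monoid.Coprod.inl : G →* MixedWord G n).range

/-- `G` is mixed identity free: no nontrivial word in `G * Fₙ` vanishes identically. -/
def MIF (G : Type*) [Group G] : Prop :=
  ∀ (n : ℕ) (w : MixedWord G n), w.IsNontrivial → ∃ h : Fin n → G, w.eval h ≠ 1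

/-- A group is locally finite if every finitely generated subgroup is finite. -/
def LocallyFiniteGrp (G : Type*) [Group G] : Prop :=
  ∀ s : Set G, s.Finite → (Subgroup.closure s : Set G).Finite

/-- `G` is ∞-MIF: for any finite subgroup `G₁` of `G` (containing the constants) and
any infinite sequence of nontrivial words in `G₁ * Fₙ`, if some finite overgroup `Γ`
of `G₁` contains a substitution making all the words nontrivial, then so does `G`. -/
def InftyMIF (G : Type*) [Group G] : Prop :=
  ∀ (G₁ : Subgroup G), Finite G₁ →
    ∀ (n : ℕ) (w : ℕ → MixedWord G₁ n), (∀ i, (w i).IsNontrivial) →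
    (∃ (Γ : Type) (_ : Group Γ), Finite Γ ∧
      ∃ f : G₁ →* Γ, Function.Injective f ∧
        ∃ γ : Fin n → Γ, ∀ i, (w i).evalHom f γ ≠ 1) →
    ∃ h : Fin n → G, ∀ i, (w i).evalHom G₁.subtype h ≠ 1

/-- `G` is omnigenous: every isomorphism of a finite subgroup `G₁ ≤ G` with a subgroup
of a finite group `Γ` extends to a surjection onto `Γ` from some finite subgroup
`G₂ ≥ G₁` of `G`. -/
def Omnigenous (G : Type*) [Group G] : Prop :=
  ∀ (G₁ : Subgroup G), Finite G₁ →
    ∀ (Γ : Type) [Group Γ] [Finite Γ] (Ψ₁ : G₁ →* Γ), Function.Injective Ψ₁ →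
    ∃ (G₂ : Subgroup G) (hle : G₁ ≤ G₂) (Ψ₂ : G₂ →* Γ),
      Finite G₂ ∧ Function.Surjective Ψ₂ ∧
      ∀ x : G₁, Ψ₂ (Subgroup.inclusion hle x) = Ψ₁ x

instance freeGroupCountable (α : Type*) [Countable α] : Countable (FreeGroup α) := by
  classical
  have : Function.Surjective (FreeGroup.mk (α := α)) := fun x => ⟨x.toWord, x.mk_toWord⟩
  exact this.countable

instance coprodCountable (M N : Type*) [Monoid M] [Monoid N] [Countable M] [Countable N] :
    Countable (Monoid.Coprod M N) := by
  have h2 : Countable (FreeMonoid (M ⊕ N)) := by unfold FreeMonoid; infer_instance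
  exact Monoid.Coprod.mk_surjective.countable

/-- The generators `x_j` are nontrivial words. -/
lemma inr_of_isNontrivial {G : Type*} [Group G] {n : ℕ} (j : Fin n) :
    MixedWord.IsNontrivial (Monoid.Coprod.inr (FreeGroup.of j) : MixedWord G n) := by
  unfold MixedWord.IsNontrivial
  rintro ⟨g, hg⟩
  have := congrArg (Monoid.Coprod.lift (1 : G →* FreeGroup (Fin n))
    (MonoidHom.id (FreeGroup (Fin n)))) hg
  simp only [Monoid.Coprod.lift_apply_inl, Monoid.Coprod.lift_apply_inr,
    MonoidHom.one_apply, MonoidHom.id_apply] at this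
  exact FreeGroup.of_ne_one j this.symm

theorem stmt_10 (G : Type) [Group G] (hlf : LocallyFiniteGrp G) :
    InftyMIF G ↔ Omnigenous G := by
  constructor
  · -- ∞-MIF → omnigenous
    intro hm G₁ hfin Γ instΓ instFinΓ Ψ₁ hinj
    haveI : Countable G₁ := Finite.to_countable
    set n := Nat.card Γ with hn
    obtain e := Finite.equivFin Γ
    set γ : Fin n → Γ := fun j => e.symm j with hγdef
    have hγsurj : Function.Surjective γ := e.symm.surjective
    set φ : MixedWord G₁ n →* Γ := Monoid.Coprod.lift Ψ₁ (FreeGroup.lift γ) with hφ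
    set W : Set (MixedWord G₁ n) := {v | v.IsNontrivial ∧ φ v ≠ 1} with hWdef
    by_cases hW : W.Nonempty
    · obtain ⟨wseq, hwseq⟩ := (Set.to_countable W).exists_eq_range hW
      have hmem : ∀ i, wseq i ∈ W := by
        intro i; rw [hwseq]; exact ⟨i, rfl⟩
      obtain ⟨h, hall⟩ := hm G₁ hfin n wseq (fun i => (hmem i).1)
        ⟨Γ, instΓ, instFinΓ, Ψ₁, hinj, γ, fun i => (hmem i).2⟩
      set ψ : MixedWord G₁ n →* G :=
        Monoid.Coprod.lift G₁.subtype (FreeGroup.lift h) with hψ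
      have hψW : ∀ v : MixedWord G₁ n, ψ v = 1 → φ v = 1 := by
        intro v h1
        by_contra hne
        by_cases hnt : v.IsNontrivial
        · have hvW : v ∈ W := ⟨hnt, hne⟩
          rw [hwseq] at hvW
          obtain ⟨i, rfl⟩ := hvW
          exact hall i h1
        · obtain ⟨g, rfl⟩ := not_not.mp hnt
          have : (g : G) = 1 := h1
          have hg1 : g = 1 := by exact_mod_cast this
          apply hne
          rw [hg1]
          simp [hφ]
      -- define G₂ and Ψ₂
      refine ⟨ψ.range, ?_, ?_⟩
      · intro g hg
        exact ⟨Monoid.Coprod.inl ⟨g, hg⟩, rfl⟩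
      · set ψ' := ψ.rangeRestrict with hψ'
        have hsurj' : Function.Surjective ψ' := ψ.rangeRestrict_surjective
        have hker : ψ'.ker ≤ φ.ker := by
          rw [MonoidHom.ker_rangeRestrict]
          intro v hv
          exact hψW v hv
        set Ψ₂ : ψ.range →* Γ := (ψ'.liftOfSurjective hsurj') ⟨φ, hker⟩ with hΨ₂def
        have hΨ₂ : ∀ v, Ψ₂ (ψ' v) = φ v := fun v =>
          ψ'.liftOfRightInverse_comp_apply _ _ ⟨φ, hker⟩ v
        refine ⟨Ψ₂, ?_, ?_, ?_⟩
        · -- finiteness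
          have hsfin : ((G₁ : Set G) ∪ Set.range h).Finite :=
            (Set.toFinite _).union (Set.finite_range h)
          have hclos := hlf _ hsfin
          have hsub : (ψ.range : Set G) ⊆
              (Subgroup.closure ((G₁ : Set G) ∪ Set.range h) : Set G) := by
            rintro _ ⟨v, rfl⟩
            induction v using Monoid.Coprod.induction_on with
            | inl g =>
              exact Subgroup.subset_closure (Or.inl g.2)
            | inr u =>
              have : ψ (Monoid.Coprod.inr u) = FreeGroup.lift h u := rfl
              rw [this]
              have hr : (FreeGroup.lift h).range ≤
                  Subgroup.closure ((G₁ : Set G) ∪ Set.range h) := by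
                rw [FreeGroup.range_lift_eq_closure]
                exact Subgroup.closure_mono Set.subset_union_right
              exact hr ⟨u, rfl⟩
            | mul x y hx hy =>
              rw [map_mul]
              exact Subgroup.mul_mem _ hx hy
          exact (hclos.subset hsub).to_subtype
        · -- surjectivity
          intro c
          obtain ⟨j, hj⟩ := hγsurj c
          refine ⟨ψ' (Monoid.Coprod.inr (FreeGroup.of j)), ?_⟩
          rw [hΨ₂]
          simp [hφ, hj]
        · -- extension
          intro x
          have hxeq : Subgroup.inclusion
              (fun g hg => ⟨Monoid.Coprod.inl ⟨g, hg⟩, rfl⟩ : G₁ ≤ ψ.range) x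
              = ψ' (Monoid.Coprod.inl x) := by
            apply Subtype.ext
            simp [hψ']
            rfl
          rw [hxeq, hΨ₂]
          simp [hφ]
    · -- W empty: Γ is trivial
      have hγ1 : ∀ j, γ j = 1 := by
        intro j
        by_contra hne
        apply hW
        refine ⟨Monoid.Coprod.inr (FreeGroup.of j), inr_of_isNontrivial j, ?_⟩
        simpa [hφ] using hne
      have htriv : ∀ c : Γ, c = 1 := by
        intro c
        obtain ⟨j, rfl⟩ := hγsurj c
        exact hγ1 j
      refine ⟨G₁, le_refl _, Ψ₁, hfin, ?_, ?_⟩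
      · intro c
        refine ⟨1, ?_⟩
        rw [map_one, htriv c]
      · intro x
        congr 1
  · -- omnigenous → ∞-MIF
    intro ho G₁ hfin n w hw hex
    obtain ⟨Γ, instΓ, hΓfin, f, hfinj, γ, hγ⟩ := hex
    haveI := hΓfin
    obtain ⟨G₂, hle, Ψ₂, hG₂fin, hsurj, hext⟩ := ho G₁ hfin Γ f hfinj
    choose h' hh' using fun j => hsurj (γ j)
    refine ⟨fun j => ((h' j : G₂) : G), ?_⟩
    intro i heq
    have key : (Monoid.Coprod.lift G₁.subtype
        (FreeGroup.lift (fun j => ((h' j : G₂) : G))) : MixedWord G₁ n →* G)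
        = G₂.subtype.comp (Monoid.Coprod.lift (Subgroup.inclusion hle)
          (FreeGroup.lift h')) := by
      apply Monoid.Coprod.hom_ext
      · exact MonoidHom.ext fun x => rfl
      · exact FreeGroup.ext_hom _ _ (fun a => by simp)
    have key2 : (Ψ₂.comp (Monoid.Coprod.lift (Subgroup.inclusion hle)
        (FreeGroup.lift h')) : MixedWord G₁ n →* Γ)
        = Monoid.Coprod.lift f (FreeGroup.lift γ) := by
      apply Monoid.Coprod.hom_ext
      · exact MonoidHom.ext fun x => by simpa using hext x
      · exact FreeGroup.ext_hom _ _ (fun a => by simp [hh'])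
    have hE : G₂.subtype ((Monoid.Coprod.lift (Subgroup.inclusion hle)
        (FreeGroup.lift h')) (w i)) = 1 := by
      have : (w i).evalHom G₁.subtype (fun j => ((h' j : G₂) : G))
          = G₂.subtype ((Monoid.Coprod.lift (Subgroup.inclusion hle)
            (FreeGroup.lift h')) (w i)) := by
        show (Monoid.Coprod.lift G₁.subtype
          (FreeGroup.lift (fun j => ((h' j : G₂) : G)))) (w i) = _
        rw [key]; rfl
      rw [← this, heq]
    have hE1 : (Monoid.Coprod.lift (Subgroup.inclusion hle)
        (FreeGroup.lift h')) (w i) = 1 := by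
      have := Subgroup.subtype_injective G₂
      exact this (by rw [hE, map_one])
    apply hγ i
    show (Monoid.Coprod.lift f (FreeGroup.lift γ)) (w i) = 1
    rw [← key2]
    simp [hE1]
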